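/- arXiv:2403.17200 — 3 statements merged into one kernel-verified Lean document; each statement's English description precedes it below -/
import Mathlib

section
/- Let R be a commutative ring and let N : ℕ × ℕ → R satisfy the WDVV recursion. Then for every integer n ≥ 1 one has N(1,n) = n² · N(n,1). (This is the abstract form of the paper's Lemma in Section 5.1, which for a smooth log Calabi–Yau pair (X,D) yields n⟨[pt]_n,[1]_1⟩ = (1/n)⟨[1]_n,[pt]_1⟩ for the two-point relative Gromov–Witten invariants.) -/
/-- If `N : ℕ × ℕ → R` satisfies the WDVV recursion
`(k+1)·N(k+1,p) + (k+p)·N(k+p,1) + Σ_{a=1}^{k-1} a·(k−a)·N(a,1)·N(k−a,p)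
  = k·N(k,p+1) + Σ_{r=1}^{p-1} (p−r)·k·N(p−r,1)·N(k,r)`
for all `k, p ≥ 1`, then `N(1,n) = n² · N(n,1)` for every `n ≥ 1`. -/
theorem two_point_relative_GW_symmetry {R : Type*} [CommRing R] (N : ℕ × ℕ → R)
    (hWDVV : ∀ k p : ℕ, 1 ≤ k → 1 ≤ p →
      ((k : R) + 1) * N (k + 1, p) + ((k : R) + (p : R)) * N (k + p, 1)
        + ∑ a ∈ Finset.Ico 1 k, (a : R) * ((k - a : ℕ) : R) * N (a, 1) * N (k - a, p)
      = (k : R) * N (k, p + 1)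
        + ∑ r ∈ Finset.Ico 1 p, ((p - r : ℕ) : R) * (k : R) * N (p - r, 1) * N (k, r))
    (n : ℕ) (hn : 1 ≤ n) :
    N (1, n) = (n : R) ^ 2 * N (n, 1) := by
  obtain ⟨m, rfl⟩ : ∃ m, n = m + 1 := ⟨n - 1, by omega⟩
  set n := m + 1 with hn1
  -- sum the WDVV relation over k ∈ [1, n)
  have key : ∑ k ∈ Finset.Ico 1 n,
      (((k : R) + 1) * N (k + 1, n - k) + ((k : R) + ((n - k : ℕ) : R)) * N (k + (n - k), 1)
        + ∑ a ∈ Finset.Ico 1 k, (a : R) * ((k - a : ℕ) : R) * N (a, 1) * N (k - a, n - k))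
      = ∑ k ∈ Finset.Ico 1 n,
      ((k : R) * N (k, (n - k) + 1)
        + ∑ r ∈ Finset.Ico 1 (n - k), (((n - k) - r : ℕ) : R) * (k : R) * N ((n - k) - r, 1) * N (k, r)) :=
    Finset.sum_congr rfl fun k hk => by
      have hk' := Finset.mem_Ico.mp hk
      exact hWDVV k (n - k) hk'.1 (by omega)
  rw [Finset.sum_add_distrib, Finset.sum_add_distrib, Finset.sum_add_distrib] at key
  set g : ℕ → R := fun j => (j : R) * N (j, (n - j) + 1) with hg
  -- A rewritten as shifted sum of g
  have hA : ∑ k ∈ Finset.Ico 1 n, ((k : R) + 1) * N (k + 1, n - k)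
      = ∑ k ∈ Finset.Ico 1 n, g (k + 1) := by
    refine Finset.sum_congr rfl fun k hk => ?_
    have hk' := Finset.mem_Ico.mp hk
    have h2 : (n - (k + 1)) + 1 = n - k := by omega
    simp only [hg, h2]
    push_cast
    ring
  have hD : ∑ k ∈ Finset.Ico 1 n, (k : R) * N (k, (n - k) + 1)
      = ∑ k ∈ Finset.Ico 1 n, g k := rfl
  -- shift lemma
  have hshift : ∑ k ∈ Finset.Ico 1 n, g (k + 1)
      = (∑ k ∈ Finset.Ico 1 n, g k) + g n - g 1 := by
    have e1 : ∑ k ∈ Finset.Ico 1 n, g (k + 1) = ∑ i ∈ Finset.range m, g (i + 2) := by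
      rw [Finset.sum_Ico_eq_sum_range]
      simp only [hn1, Nat.add_sub_cancel]
      exact Finset.sum_congr rfl fun i _ => by norm_num [add_comm, add_assoc, add_left_comm]
    have e2 : ∑ k ∈ Finset.Ico 1 n, g k = ∑ i ∈ Finset.range m, g (i + 1) := by
      rw [Finset.sum_Ico_eq_sum_range]
      simp only [hn1, Nat.add_sub_cancel]
      exact Finset.sum_congr rfl fun i _ => by rw [add_comm]
    have e3 : ∑ i ∈ Finset.range (m + 1), g (i + 1)
        = (∑ i ∈ Finset.range m, g (i + 2)) + g 1 := by
      rw [Finset.sum_range_succ']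
    have e4 : ∑ i ∈ Finset.range (m + 1), g (i + 1)
        = (∑ i ∈ Finset.range m, g (i + 1)) + g (m + 1) := Finset.sum_range_succ _ _
    rw [e1, e2]
    have : (∑ i ∈ Finset.range m, g (i + 2)) + g 1
        = (∑ i ∈ Finset.range m, g (i + 1)) + g (m + 1) := by rw [← e3, e4]
    have hgn : g (m + 1) = g n := rfl
    linear_combination this - hgn
  -- B equals (n-1) * n * N(n,1)
  have hB : ∑ k ∈ Finset.Ico 1 n, ((k : R) + ((n - k : ℕ) : R)) * N (k + (n - k), 1)
      = (m : R) * ((n : R) * N (n, 1)) := by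
    have : ∀ k ∈ Finset.Ico 1 n, ((k : R) + ((n - k : ℕ) : R)) * N (k + (n - k), 1)
        = (n : R) * N (n, 1) := by
      intro k hk
      have hk' := Finset.mem_Ico.mp hk
      have h1 : k + (n - k) = n := by omega
      rw [h1, ← Nat.cast_add, h1]
    rw [Finset.sum_congr rfl this, Finset.sum_const, Nat.card_Ico, hn1, Nat.add_sub_cancel,
      nsmul_eq_mul]
  -- the two double sums coincide
  have hCE : (∑ k ∈ Finset.Ico 1 n, ∑ a ∈ Finset.Ico 1 k,
        (a : R) * ((k - a : ℕ) : R) * N (a, 1) * N (k - a, n - k))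
      = ∑ k ∈ Finset.Ico 1 n, ∑ r ∈ Finset.Ico 1 (n - k),
        (((n - k) - r : ℕ) : R) * (k : R) * N ((n - k) - r, 1) * N (k, r) := by
    rw [Finset.sum_sigma', Finset.sum_sigma']
    refine Finset.sum_nbij' (fun x => ⟨x.1 - x.2, n - x.1⟩) (fun x => ⟨n - x.2, (n - x.1) - x.2⟩)
      ?_ ?_ ?_ ?_ ?_
    · intro x hx
      simp only [Finset.mem_sigma, Finset.mem_Ico] at hx ⊢
      omega
    · intro x hx
      simp only [Finset.mem_sigma, Finset.mem_Ico] at hx ⊢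
      omega
    · intro x hx
      simp only [Finset.mem_sigma, Finset.mem_Ico] at hx
      ext <;> simp <;> omega
    · intro x hx
      simp only [Finset.mem_sigma, Finset.mem_Ico] at hx
      ext <;> simp <;> omega
    · intro x hx
      simp only [Finset.mem_sigma, Finset.mem_Ico] at hx
      have e : (n - (x.1 - x.2)) - (n - x.1) = x.2 := by omega
      simp only [e]
  -- assemble
  have hg1 : g 1 = N (1, n) := by
    have : (n - 1) + 1 = n := by omega
    simp [hg, this]
  have hgn : g n = (n : R) * N (n, 1) := by
    have : n - n + 1 = 1 := by omega
    simp [hg, this]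
  rw [hA, hshift, hB, hCE, hD, hg1, hgn] at key
  have hcast : (n : R) = (m : R) + 1 := by push_cast [hn1]; ring
  linear_combination -key - (n : R) * N (n, 1) * hcast
end

section
/- Let R be a commutative ring and let N : ℕ × ℕ → R satisfy the WDVV recursion. Then for every integer n ≥ 1: N(1,n) = n²·N(n,1) + Σ_{k=1}^{n-1} Σ_{a=1}^{k-1} a·(k−a)·N(a,1)·N(k−a, n−k) − Σ_{k=1}^{n-1} Σ_{r=1}^{n-k-1} (n−k−r)·k·N(n−k−r,1)·N(k,r). (This is the telescoped identity obtained in the proof of the Lemma in Section 5.1 by specializing the WDVV recursion to the pairs (k, p) = (k, n−k) for k = 1, …, n−1 and summing.) -/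
open Finset

/-- If `N : ℕ × ℕ → R` satisfies the WDVV recursion, then for every `n ≥ 1`,
`N(1,n) = n²·N(n,1) + Σ_{k=1}^{n-1} Σ_{a=1}^{k-1} a·(k−a)·N(a,1)·N(k−a, n−k)
  − Σ_{k=1}^{n-1} Σ_{r=1}^{n-k-1} (n−k−r)·k·N(n−k−r,1)·N(k,r)`. -/
theorem two_point_relative_GW_telescoped {R : Type*} [CommRing R] (N : ℕ × ℕ → R)
    (hWDVV : ∀ k p : ℕ, 1 ≤ k → 1 ≤ p →
      ((k : R) + 1) * N (k + 1, p) + ((k : R) + (p : R)) * N (k + p, 1)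
        + ∑ a ∈ Finset.Ico 1 k, (a : R) * ((k - a : ℕ) : R) * N (a, 1) * N (k - a, p)
      = (k : R) * N (k, p + 1)
        + ∑ r ∈ Finset.Ico 1 p, ((p - r : ℕ) : R) * (k : R) * N (p - r, 1) * N (k, r))
    (n : ℕ) (hn : 1 ≤ n) :
    N (1, n) = (n : R) ^ 2 * N (n, 1)
      + (∑ k ∈ Finset.Ico 1 n, ∑ a ∈ Finset.Ico 1 k,
          (a : R) * ((k - a : ℕ) : R) * N (a, 1) * N (k - a, n - k))
      - (∑ k ∈ Finset.Ico 1 n, ∑ r ∈ Finset.Ico 1 (n - k),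
          ((n - k - r : ℕ) : R) * (k : R) * N (n - k - r, 1) * N (k, r)) := by
  set f : ℕ → R := fun j => (j : R) * N (j, n + 1 - j) with hf
  -- telescoping
  have tele : ∑ k ∈ Ico 1 n, f (k + 1) = (∑ k ∈ Ico 1 n, f k) + f n - f 1 := by
    have h1 : ∑ k ∈ Ico 1 n, f (k + 1) = ∑ k ∈ Ico 2 (n + 1), f k := by
      exact Finset.sum_Ico_add' f 1 n 1
    have h2 : ∑ k ∈ Ico 1 (n + 1), f k = (∑ k ∈ Ico 1 n, f k) + f n :=
      Finset.sum_Ico_succ_top hn f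
    have h3 : ∑ k ∈ Ico 1 (n + 1), f k = f 1 + ∑ k ∈ Ico 2 (n + 1), f k :=
      Finset.sum_eq_sum_Ico_succ_bot (by omega) f
    rw [h1]; linear_combination h2 - h3
  -- sum the WDVV identities over k with p = n - k
  have H : ∑ k ∈ Ico 1 n, (((k : R) + 1) * N (k + 1, n - k)
        + ((k : R) + ((n - k : ℕ) : R)) * N (k + (n - k), 1)
        + ∑ a ∈ Ico 1 k, (a : R) * ((k - a : ℕ) : R) * N (a, 1) * N (k - a, n - k))
      = ∑ k ∈ Ico 1 n, ((k : R) * N (k, n - k + 1)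
        + ∑ r ∈ Ico 1 (n - k), ((n - k - r : ℕ) : R) * (k : R) * N (n - k - r, 1) * N (k, r)) := by
    refine Finset.sum_congr rfl fun k hk => ?_
    simp only [mem_Ico] at hk
    exact hWDVV k (n - k) hk.1 (by omega)
  rw [Finset.sum_add_distrib, Finset.sum_add_distrib, Finset.sum_add_distrib] at H
  have E1 : ∑ k ∈ Ico 1 n, ((k : R) + 1) * N (k + 1, n - k) = ∑ k ∈ Ico 1 n, f (k + 1) := by
    refine Finset.sum_congr rfl fun k hk => ?_
    simp only [mem_Ico] at hk
    have h : n + 1 - (k + 1) = n - k := by omega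
    simp only [hf, h]
    push_cast
    ring
  have E2 : ∑ k ∈ Ico 1 n, (k : R) * N (k, n - k + 1) = ∑ k ∈ Ico 1 n, f k := by
    refine Finset.sum_congr rfl fun k hk => ?_
    simp only [mem_Ico] at hk
    have h : n + 1 - k = n - k + 1 := by omega
    simp only [hf, h]
  have E3 : ∑ k ∈ Ico 1 n, ((k : R) + ((n - k : ℕ) : R)) * N (k + (n - k), 1)
      = ((n : R) - 1) * ((n : R) * N (n, 1)) := by
    have step : ∀ k ∈ Ico 1 n, ((k : R) + ((n - k : ℕ) : R)) * N (k + (n - k), 1)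
        = (n : R) * N (n, 1) := by
      intro k hk
      simp only [mem_Ico] at hk
      have h1 : k + (n - k) = n := by omega
      have h2 : ((n - k : ℕ) : R) = (n : R) - (k : R) := by
        rw [Nat.cast_sub (by omega)]
      rw [h1, h2]; ring
    rw [Finset.sum_congr rfl step, Finset.sum_const, Nat.card_Ico, nsmul_eq_mul,
      Nat.cast_sub hn, Nat.cast_one]
  rw [E1, E2, E3] at H
  have hfn : f n = (n : R) * N (n, 1) := by
    have h : n + 1 - n = 1 := by omega
    simp only [hf, h]
  have hf1 : f 1 = N (1, n) := by
    have h : n + 1 - 1 = n := by omega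
    simp only [hf, h, Nat.cast_one, one_mul]
  rw [hfn, hf1] at tele
  linear_combination tele - H
end

section
/- Let G be a finite tree and let c₁, c₂ be functions from the edge set of G to the natural numbers such that (i) for every edge e, c₁(e) = 0 or c₂(e) = 0, and (ii) for every vertex v, the sum of c₁(e) over all edges e incident to v equals the sum of c₂(e) over all edges e incident to v. Then c₁(e) = 0 and c₂(e) = 0 for every edge e. (This is the combinatorial core of Lemma 3.3/3.4 of the paper: in a genus zero degeneration graph every edge must have contact order zero with both orbifold divisors X×∞ and X×pt, respectively Y_∞ and Y_σ, because an edge cannot have nonzero contact with both divisors while each vertex has equal total contact order with the two divisors.) -/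
open SimpleGraph Finset

/-- In a tree, if `u` and `a` are both neighbors of `b` whose distance from `r` is at most
that of `b`, then `u = a`. -/
lemma tree_unique_down {V : Type*} {G : SimpleGraph V} (hG : G.IsTree) {r b u a : V}
    (hbu : G.Adj b u) (hba : G.Adj b a)
    (hu : G.dist r u ≤ G.dist r b) (ha : G.dist r a ≤ G.dist r b) : u = a := by
  classical
  have hconn : G.Connected := hG.isConnected
  have key : ∀ x : V, G.Adj b x → G.dist r x ≤ G.dist r b →
      ∃ q : G.Walk b r, q.IsPath ∧ q.getVert 1 = x := by
    intro x hbx hx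
    obtain ⟨p, hp, hlen⟩ := hconn.exists_path_of_dist r x
    have hbsup : b ∉ p.support := by
      intro hmem
      have h1 : G.dist r b ≤ (p.takeUntil b hmem).length := SimpleGraph.dist_le _
      have h2 : G.dist b x ≤ (p.dropUntil b hmem).length := SimpleGraph.dist_le _
      have h3 : (p.takeUntil b hmem).length + (p.dropUntil b hmem).length = p.length := by
        rw [← SimpleGraph.Walk.length_append, p.take_spec hmem]
      have hbx0 : G.dist b x = 0 := by omega
      have : b = x := (hconn.dist_eq_zero_iff).mp hbx0
      exact G.irrefl (this ▸ hbx)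
    have hbsup' : b ∉ p.reverse.support := by
      rwa [SimpleGraph.Walk.support_reverse, List.mem_reverse]
    refine ⟨SimpleGraph.Walk.cons hbx p.reverse, hp.reverse.cons hbsup', ?_⟩
    simp [SimpleGraph.Walk.getVert]
  obtain ⟨qu, hqu, hqu1⟩ := key u hbu hu
  obtain ⟨qa, hqa, hqa1⟩ := key a hba ha
  have : qu = qa := (hG.existsUnique_path b r).unique hqu hqa
  rw [← hqu1, ← hqa1, this]

/-- In a finite tree `G`, if `c₁, c₂` assign natural numbers to the edges such that
(i) for every edge `e`, `c₁ e = 0` or `c₂ e = 0`, and (ii) at every vertex the total of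
`c₁` over incident edges equals the total of `c₂` over incident edges, then
`c₁` and `c₂` vanish on every edge. -/
theorem tree_balanced_contact_orders_vanish {V : Type*} [Fintype V] [DecidableEq V]
    (G : SimpleGraph V) [DecidableRel G.Adj] (hG : G.IsTree)
    (c₁ c₂ : Sym2 V → ℕ)
    (h1 : ∀ e ∈ G.edgeSet, c₁ e = 0 ∨ c₂ e = 0)
    (h2 : ∀ v : V, ∑ e ∈ G.edgeFinset.filter (fun e => v ∈ e), c₁ e
                 = ∑ e ∈ G.edgeFinset.filter (fun e => v ∈ e), c₂ e) :
    ∀ e ∈ G.edgeSet, c₁ e = 0 ∧ c₂ e = 0 := by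
  classical
  by_contra hcon
  push_neg at hcon
  obtain ⟨e₀, he₀, hne₀⟩ := hcon
  have hconn : G.Connected := hG.isConnected
  -- the key local lemma: a "bad" edge at a vertex forces another bad edge at that vertex
  have key : ∀ e ∈ G.edgeFinset, ∀ v ∈ e, ¬(c₁ e = 0 ∧ c₂ e = 0) →
      ∃ e' ∈ G.edgeFinset, v ∈ e' ∧ e' ≠ e ∧ ¬(c₁ e' = 0 ∧ c₂ e' = 0) := by
    intro e he v hv hbad
    by_contra hno
    push_neg at hno
    have hmem : e ∈ G.edgeFinset.filter (fun e => v ∈ e) := by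
      simp [Finset.mem_filter, he, hv]
    have hs1 : ∑ e' ∈ G.edgeFinset.filter (fun e => v ∈ e), c₁ e' = c₁ e := by
      refine Finset.sum_eq_single_of_mem e hmem ?_
      intro e' he' hne
      rcases Finset.mem_filter.mp he' with ⟨he'E, hv'⟩
      exact (hno e' he'E hv' hne).1
    have hs2 : ∑ e' ∈ G.edgeFinset.filter (fun e => v ∈ e), c₂ e' = c₂ e := by
      refine Finset.sum_eq_single_of_mem e hmem ?_
      intro e' he' hne
      rcases Finset.mem_filter.mp he' with ⟨he'E, hv'⟩
      exact (hno e' he'E hv' hne).2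
    have heq : c₁ e = c₂ e := by rw [← hs1, ← hs2]; exact h2 v
    rcases h1 e (SimpleGraph.mem_edgeFinset.mp he) with h | h
    · exact hbad ⟨h, heq ▸ h⟩
    · exact hbad ⟨heq.trans h, h⟩
  -- the set of bad edges
  set S := G.edgeFinset.filter (fun e => ¬(c₁ e = 0 ∧ c₂ e = 0)) with hS
  have hSne : S.Nonempty := ⟨e₀, by
    simp only [hS, Finset.mem_filter, SimpleGraph.mem_edgeFinset]
    exact ⟨he₀, fun h => hne₀ h.1 h.2⟩⟩
  obtain ⟨r⟩ := hconn.nonempty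
  -- measure on edges
  set m : Sym2 V → ℕ := fun e => Sym2.lift ⟨fun x y => max (G.dist r x) (G.dist r y),
    fun x y => max_comm _ _⟩ e with hm
  obtain ⟨e, heS, hmax⟩ := S.exists_max_image m hSne
  rcases Finset.mem_filter.mp heS with ⟨heE, hbad⟩
  have heE' : e ∈ G.edgeSet := SimpleGraph.mem_edgeFinset.mp heE
  -- write `e = s(x, y)` with `dist r x ≤ dist r y`
  have hrep : ∀ e' ∈ G.edgeSet, ∃ x y, G.Adj x y ∧ e' = s(x, y) ∧ G.dist r x ≤ G.dist r y := by
    intro e' he'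
    induction e' using Sym2.ind with
    | _ a b =>
      have hab : G.Adj a b := he'
      rcases le_total (G.dist r a) (G.dist r b) with h | h
      · exact ⟨a, b, hab, rfl, h⟩
      · exact ⟨b, a, hab.symm, Sym2.eq_swap, h⟩
  obtain ⟨x, y, hxy, rfl, hdxy⟩ := hrep e heE'
  have hme : m s(x, y) = G.dist r y := by simp [hm, max_eq_right hdxy]
  -- get another bad edge at `y`
  obtain ⟨e', he'E, hye', hne', hbad'⟩ := key s(x, y) heE y (by simp) hbad
  obtain ⟨u, rfl⟩ := Sym2.mem_iff_exists.mp hye'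
  have hyu : G.Adj y u := SimpleGraph.mem_edgeFinset.mp he'E
  have he'S : s(y, u) ∈ S := Finset.mem_filter.mpr ⟨he'E, hbad'⟩
  have hmle : m s(y, u) ≤ m s(x, y) := hmax _ he'S
  have hme' : m s(y, u) = max (G.dist r y) (G.dist r u) := by simp [hm]
  have hdu : G.dist r u ≤ G.dist r y := by
    rw [hme', hme] at hmle
    exact le_trans (le_max_right _ _) hmle
  have : u = x := tree_unique_down hG hyu hxy.symm hdu hdxy
  exact hne' (by rw [this, Sym2.eq_swap])
end
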